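/- The L.P.R. procedure satisfies the Pareto condition: for any preference profile and any two alternatives x and y, if every voter prefers x to y, then y is not an L.P.R. winner. -/

import Mathlib

open Finset

attribute [local instance] Classical.propDecidable

noncomputable section

/-- A preference profile for `n` voters: each voter has a ballot, a list of
alternatives ordered from most preferred (head) to least preferred (last). -/
abbrev Profile (n : ℕ) (A : Type*) := Fin n → List A

variable {A : Type*} [DecidableEq A]

/-- A valid profile: every ballot is a strict linear order on the alternatives,
i.e. a duplicate-free list containing every alternative. -/
def IsProfile {n : ℕ} (P : Profile n A) : Prop :=
  ∀ i, (P i).Nodup ∧ ∀ a : A, a ∈ P i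

/-- The voter with ballot `l` prefers `x` to `y`. -/
def Prefers (l : List A) (x y : A) : Prop := l.idxOf x < l.idxOf y

/-- The number of voters who rank `a` last (at the bottom of their list). -/
def lastCount {n : ℕ} (P : Profile n A) (a : A) : ℕ :=
  (univ.filter fun i => (P i).getLast? = some a).card

/-- The number of voters who rank `a` first (at the top of their list). -/
def firstCount {n : ℕ} (P : Profile n A) (a : A) : ℕ :=
  (univ.filter fun i => (P i).head? = some a).card

/-- The number of voters preferring `x` to `y`. -/
def prefCount {n : ℕ} (P : Profile n A) (x y : A) : ℕ :=
  (univ.filter fun i => Prefers (P i) x y).card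

/-- `x` defeats `y` in a pairwise majority contest: strictly more voters
prefer `x` to `y` than prefer `y` to `x`. -/
def Defeats {n : ℕ} (P : Profile n A) (x y : A) : Prop :=
  prefCount P y x < prefCount P x y

/-- Condorcet's method: the winners are the alternatives defeated by no other alternative. -/
def CondorcetWinners {n : ℕ} (P : Profile n A) : Set A :=
  {a | ∀ b, ¬ Defeats P b a}

/-- `a` is a Condorcet winner: it is the unique winner of Condorcet's method. -/
def IsCondorcetWinner {n : ℕ} (P : Profile n A) (a : A) : Prop :=
  CondorcetWinners P = {a}

/-- The bottom alternative of ballot `l` among the still-remaining alternatives `S`. -/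
def bottomAmong (S : Finset A) (l : List A) : Option A :=
  (l.filter fun x => decide (x ∈ S)).getLast?

/-- The number of voters ranking `a` last among the remaining alternatives `S`. -/
def hLastCount {n : ℕ} (P : Profile n A) (S : Finset A) (a : A) : ℕ :=
  (univ.filter fun i => bottomAmong S (P i) = some a).card

/-- One round of the L.P.R. procedure: delete from `S` the alternative(s)
currently appearing at the bottom of the largest number of lists,
i.e. keep those that are not maximal. -/
def lprStep {n : ℕ} (P : Profile n A) (S : Finset A) : Finset A :=
  S.filter fun a => ∃ b ∈ S, hLastCount P S a < hLastCount P S b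

/-- Iterating the L.P.R. rounds; once a round would delete every remaining
alternative, the process stops (those alternatives are the ones deleted last). -/
def lprIter {n : ℕ} [Fintype A] (P : Profile n A) : ℕ → Finset A
  | 0 => Finset.univ
  | k + 1 =>
      let S := lprIter P k
      if lprStep P S = ∅ then S else lprStep P S

/-- L.P.R. winners: the alternative(s) deleted in the final round. -/
def LPRWinners {n : ℕ} [Fintype A] (P : Profile n A) : Finset A :=
  lprIter P (Fintype.card A)

/-- If `x` occurs strictly before `y` in `l` and `p y` holds, then `x` is not
the last element of `l.filter p`. -/
lemma filter_getLast_ne (x y : A) (p : A → Bool) (hpy : p y = true) :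
    ∀ l : List A, l.Nodup → y ∈ l → l.idxOf x < l.idxOf y →
      (l.filter p).getLast? ≠ some x := by
  intro l
  induction l with
  | nil => simp
  | cons a t ih =>
    intro hnd hy hlt heq
    by_cases hax : a = x
    · subst hax
      have hyne : y ≠ a := by
        intro hya; subst hya; simp [List.idxOf_cons_self] at hlt
      have hyt : y ∈ t := (List.mem_cons.mp hy).resolve_left hyne
      have hanot : a ∉ t := (List.nodup_cons.mp hnd).1
      have hyft : y ∈ t.filter p := List.mem_filter.mpr ⟨hyt, hpy⟩
      have hftne : t.filter p ≠ [] := List.ne_nil_of_mem hyft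
      obtain ⟨b, L, hbL⟩ := List.exists_cons_of_ne_nil hftne
      by_cases hpa : p a = true
      · rw [List.filter_cons_of_pos hpa, hbL, List.getLast?_cons_cons] at heq
        have hmem : a ∈ b :: L := List.mem_of_mem_getLast? (Option.mem_def.mpr heq)
        have : a ∈ t.filter p := hbL ▸ hmem
        exact hanot (List.mem_filter.mp this).1
      · rw [List.filter_cons_of_neg (by simpa using hpa)] at heq
        have : a ∈ t.filter p := List.mem_of_mem_getLast? (Option.mem_def.mpr heq)
        exact hanot (List.mem_filter.mp this).1
    · have hay : a ≠ y := by
        intro hay; subst hay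
        rw [List.idxOf_cons_self] at hlt; omega
      have hyt : y ∈ t := (List.mem_cons.mp hy).resolve_left (Ne.symm hay)
      have hlt' : t.idxOf x < t.idxOf y := by
        rw [List.idxOf_cons_ne t hax, List.idxOf_cons_ne t hay] at hlt
        omega
      have hnd' : t.Nodup := (List.nodup_cons.mp hnd).2
      by_cases hpa : p a = true
      · have hyft : y ∈ t.filter p := List.mem_filter.mpr ⟨hyt, hpy⟩
        obtain ⟨b, L, hbL⟩ := List.exists_cons_of_ne_nil (List.ne_nil_of_mem hyft)
        rw [List.filter_cons_of_pos hpa, hbL, List.getLast?_cons_cons, ← hbL] at heq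
        exact ih hnd' hyt hlt' heq
      · rw [List.filter_cons_of_neg (by simpa using hpa)] at heq
        exact ih hnd' hyt hlt' heq

/-- If every voter prefers `x` to `y` and `y` is still in `S`, no voter ranks
`x` last among `S`. -/
lemma hLastCount_eq_zero {n : ℕ} (P : Profile n A) (hP : IsProfile P)
    (x y : A) (h : ∀ i, Prefers (P i) x y) (S : Finset A) (hyS : y ∈ S) :
    hLastCount P S x = 0 := by
  unfold hLastCount
  rw [Finset.card_eq_zero, Finset.filter_eq_empty_iff]
  intro i _
  exact filter_getLast_ne x y _ (decide_eq_true hyS) (P i) (hP i).1 ((hP i).2 y) (h i)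

/-- Every voter has a bottom alternative among a nonempty `S`. -/
lemma exists_bottom {n : ℕ} (P : Profile n A) (hP : IsProfile P)
    (S : Finset A) (hS : S.Nonempty) (i : Fin n) :
    ∃ a ∈ S, bottomAmong S (P i) = some a := by
  obtain ⟨s, hs⟩ := hS
  have hmem : s ∈ (P i).filter (fun x => decide (x ∈ S)) :=
    List.mem_filter.mpr ⟨(hP i).2 s, decide_eq_true hs⟩
  have hne : (P i).filter (fun x => decide (x ∈ S)) ≠ [] := List.ne_nil_of_mem hmem
  have : bottomAmong S (P i) ≠ none := by
    unfold bottomAmong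
    simpa [List.getLast?_eq_none_iff] using hne
  obtain ⟨a, ha⟩ := Option.ne_none_iff_exists'.mp this
  refine ⟨a, ?_, ha⟩
  have : a ∈ (P i).filter (fun x => decide (x ∈ S)) :=
    List.mem_of_mem_getLast? (Option.mem_def.mpr ha)
  exact of_decide_eq_true (List.mem_filter.mp this).2

/-- If there is at least one voter, some alternative in a nonempty `S` is
ranked last by at least one voter. -/
lemma exists_pos_count {n : ℕ} (hn : 0 < n) (P : Profile n A) (hP : IsProfile P)
    (S : Finset A) (hS : S.Nonempty) :
    ∃ b ∈ S, 0 < hLastCount P S b := by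
  obtain ⟨b, hbS, hb⟩ := exists_bottom P hP S hS ⟨0, hn⟩
  refine ⟨b, hbS, Finset.card_pos.mpr ⟨⟨0, hn⟩, ?_⟩⟩
  exact Finset.mem_filter.mpr ⟨Finset.mem_univ _, hb⟩

/-- the L.P.R. procedure satisfies the Pareto condition:
if every voter prefers `x` to `y`, then `y` is not an L.P.R. winner. -/
theorem lpr_pareto {A : Type*} [Fintype A] [DecidableEq A]
    (hA : 3 ≤ Fintype.card A) {n : ℕ} (hn : 0 < n)
    (P : Profile n A) (hP : IsProfile P) (x y : A)
    (h : ∀ i, Prefers (P i) x y) : y ∉ LPRWinners P := by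
  have key : ∀ k, y ∈ lprIter P k →
      x ∈ lprIter P k ∧ (lprIter P k).card + k ≤ Fintype.card A := by
    intro k
    induction k with
    | zero => intro _; simp [lprIter]
    | succ k ih =>
      intro hy1
      have hsub : lprIter P (k + 1) ⊆ lprIter P k := by
        simp only [lprIter]
        split
        · exact Finset.Subset.refl _
        · exact Finset.filter_subset _ _
      have hyS : y ∈ lprIter P k := hsub hy1
      obtain ⟨hxS, hcard⟩ := ih hyS
      set S := lprIter P k with hSdef
      have hx0 : hLastCount P S x = 0 := hLastCount_eq_zero P hP x y h S hyS
      obtain ⟨b, hbS, hbpos⟩ := exists_pos_count hn P hP S ⟨y, hyS⟩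
      have hxstep : x ∈ lprStep P S :=
        Finset.mem_filter.mpr ⟨hxS, b, hbS, by omega⟩
      have hne : lprStep P S ≠ ∅ := fun he => by simp [he] at hxstep
      have heq : lprIter P (k + 1) = lprStep P S := by
        simp only [lprIter, hSdef]
        rw [if_neg (by rw [← hSdef]; exact hne)]
      obtain ⟨m, hmS, hmax⟩ :=
        Finset.exists_max_image S (hLastCount P S) ⟨y, hyS⟩
      have hmnot : m ∉ lprStep P S := by
        intro hm
        obtain ⟨_, b', hb', hlt⟩ := Finset.mem_filter.mp hm
        exact absurd (hmax b' hb') (by omega)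
      have hlt : (lprStep P S).card < S.card :=
        Finset.card_lt_card
          ((Finset.ssubset_iff_of_subset (Finset.filter_subset _ _)).mpr
            ⟨m, hmS, hmnot⟩)
      refine ⟨heq ▸ hxstep, ?_⟩
      rw [heq]; omega
  intro hyW
  obtain ⟨-, hc⟩ := key (Fintype.card A) hyW
  have : 0 < (lprIter P (Fintype.card A)).card :=
    Finset.card_pos.mpr ⟨y, hyW⟩
  omega
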